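/- Let k be a field of characteristic p > 2 and A = k[t, t^{-1}] the Laurent polynomial algebra, identified with the group algebra k[Z]. Define the map on Hochschild chains in degree 1 by ζΦ(⟨t^{n₀}, t^{n₁}⟩) = ⟨t^{p n₀ + (p−1) n₁}, t^{n₁}⟩, extended linearly. Then under the identification of HH₁(A) with the Kähler differentials Ω¹_{A/k} sending ⟨t^{n₀}, t^{n₁}⟩ to n₁ t^{n₁+n₀−1} dt, the map ζΦ corresponds to the inverse Cartier map C^{-1} determined by C^{-1}(t^n · dt/t) = t^{pn} · dt/t, i.e. C^{-1}(n₁ t^{n₀+n₁−1} dt) = n₁ t^{p(n₀+n₁)−1} dt. -/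

import Mathlib

open LaurentPolynomial

lemma derivation_T_int {k : Type*} [CommRing k] {M : Type*} [AddCommGroup M]
    [Module (LaurentPolynomial k) M] [Module k M]
    [IsScalarTower k (LaurentPolynomial k) M]
    (D : Derivation k (LaurentPolynomial k) M) (n : ℤ) :
    D (T n) = n • ((T (n - 1) : LaurentPolynomial k) • D (T 1)) := by
  induction n using Int.induction_on with
  | zero => simp [T_zero]
  | succ m ih =>
    have h : (T ((m : ℤ) + 1) : LaurentPolynomial k) = T m * T 1 := by
      rw [← T_add]
    rw [h, Derivation.leibniz, ih]
    have h2 : (T 1 : LaurentPolynomial k) • ((m : ℤ) • ((T ((m : ℤ) - 1) : LaurentPolynomial k) • D (T 1)))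
        = (m : ℤ) • ((T (m : ℤ) : LaurentPolynomial k) • D (T 1)) := by
      rw [smul_comm, smul_smul, ← T_add]
      ring_nf
    rw [h2]
    have h3 : ((m : ℤ) + 1 - 1) = (m : ℤ) := by ring
    rw [h3, add_smul, one_smul]
    abel
  | pred m ih =>
    have h : (T (-(m : ℤ)) : LaurentPolynomial k) = T (-(m : ℤ) - 1) * T 1 := by
      rw [← T_add]; ring_nf
    have hib := ih
    rw [h, Derivation.leibniz] at hib
    -- isolate D (T (-(m:ℤ)-1))
    have key : (T 1 : LaurentPolynomial k) • D (T (-(m : ℤ) - 1))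
        = (-(m : ℤ) - 1) • ((T (-(m : ℤ) - 1) : LaurentPolynomial k) • D (T 1)) := by
      have := hib
      have e : (-(m : ℤ)) • ((T (-(m : ℤ) - 1) : LaurentPolynomial k) • D (T 1))
          = (T (-(m : ℤ) - 1) : LaurentPolynomial k) • D (T 1)
            + (-(m : ℤ) - 1) • ((T (-(m : ℤ) - 1) : LaurentPolynomial k) • D (T 1)) := by
        rw [sub_smul, one_smul]
        abel
      rw [e] at this
      exact add_left_cancel this
    have hunit : (T (-1) : LaurentPolynomial k) * T 1 = 1 := by
      rw [← T_add]; norm_num [T_zero]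
    calc D (T (-(m : ℤ) - 1))
        = ((T (-1) : LaurentPolynomial k) * T 1) • D (T (-(m : ℤ) - 1)) := by
          rw [hunit, one_smul]
      _ = (T (-1) : LaurentPolynomial k) • ((T 1 : LaurentPolynomial k) • D (T (-(m : ℤ) - 1))) := by
          rw [mul_smul]
      _ = (T (-1) : LaurentPolynomial k) • ((-(m : ℤ) - 1) • ((T (-(m : ℤ) - 1) : LaurentPolynomial k) • D (T 1))) := by rw [key]
      _ = (-(m : ℤ) - 1) • ((T (-(m : ℤ) - 1 - 1) : LaurentPolynomial k) • D (T 1)) := by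
          rw [smul_comm, smul_smul, ← T_add]; ring_nf

/-- Let `k` be a field of odd characteristic `p` and
`A = k[t,t⁻¹] = k[ℤ]`.  The degree-one comparison of the map
`ζΦ(⟨t^{n₀}, t^{n₁}⟩) = ⟨t^{p n₀ + (p-1) n₁}, t^{n₁}⟩` with the inverse Cartier map:
under the HKR identification `⟨a, b⟩ ↦ a db` of degree-one Hochschild chains with Kähler
differentials, the image `t^{p n₀ + (p-1) n₁} d(t^{n₁})` of `ζΦ(⟨t^{n₀}, t^{n₁}⟩)` equals
`C⁻¹(n₁ t^{n₀+n₁-1} dt) = n₁ t^{p(n₀+n₁)-1} dt` in `Ω¹_{A/k}`. -/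
theorem zetaPhi_is_inverse_cartier_degree_one {k : Type*} [Field k] (p : ℕ)
    [Fact p.Prime] [CharP k p] (hp : p ≠ 2) (n₀ n₁ : ℤ) :
    (T ((p : ℤ) * n₀ + ((p : ℤ) - 1) * n₁) : LaurentPolynomial k) •
        (KaehlerDifferential.D k (LaurentPolynomial k)) (T n₁) =
      n₁ • ((T ((p : ℤ) * (n₀ + n₁) - 1) : LaurentPolynomial k) •
        (KaehlerDifferential.D k (LaurentPolynomial k)) (T 1)) := by
  rw [derivation_T_int, smul_comm, smul_smul, ← T_add]
  congr 2
  ring
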